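/- If Γ is a noncrossing inverse pairing on an infinitary word W with ⋃Γ = W̄ (the whole index set), then for every finite subset F of D the restriction of Γ to the indices carrying letters from F is a noncrossing inverse pairing on the finite word W_F whose union is all of the index set of W_F; consequently W_F = 1 in the free group on F, and hence W is equivalent to the empty word. -/

import Mathlib

noncomputable section

namespace EarringPaper

/-- An infinitary word over the alphabet `D`: a function from a countable linearly
ordered index set to the letters `a`/`a⁻` (`(a, true)`/`(a, false)`), in which each
letter occurs only finitely often. -/
structure InfWord (D : Type*) where
  ι : Type
  [ord : LinearOrder ι]
  [cnt : Countable ι]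
  letter : ι → D × Bool
  finOcc : ∀ a : D, {i : ι | (letter i).1 = a}.Finite

attribute [instance] InfWord.ord InfWord.cnt

variable {D : Type*}

lemma InfWord.finF (W : InfWord D) (F : Finset D) :
    {i : W.ι | (W.letter i).1 ∈ F}.Finite := by
  have h : {i : W.ι | (W.letter i).1 ∈ F} = ⋃ a ∈ F, {i : W.ι | (W.letter i).1 = a} := by
    ext i; simp
  rw [h]
  exact F.finite_toSet.biUnion fun a _ => W.finOcc a

/-- The finite word `W_F`: the restriction of `W` to the letters from the finite set `F`,
evaluated as an element of the free group on `D`. -/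
def InfWord.evalF (W : InfWord D) (F : Finset D) : FreeGroup D :=
  (((W.finF F).toFinset.sort (· ≤ ·)).map fun i => FreeGroup.mk [W.letter i]).prod

/-- `W` is equivalent to the empty word: all its finite restrictions `W_F` are trivial. -/
def InfWord.IsNull (W : InfWord D) : Prop := ∀ F : Finset D, W.evalF F = 1

/-- The subword of `W` supported on a set `S` of indices. -/
def InfWord.restrict (W : InfWord D) (S : Set W.ι) : InfWord D where
  ι := S
  letter i := W.letter i.val
  finOcc a := by
    have h : {i : S | (W.letter i.val).1 = a} =
        Subtype.val ⁻¹' {i : W.ι | (W.letter i).1 = a} := rfl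
    rw [h]
    exact (W.finOcc a).preimage Subtype.val_injective.injOn

/-- An order-convex set of indices (the support of a subword). -/
def IsConvexSub {W : InfWord D} (S : Set W.ι) : Prop :=
  ∀ i ∈ S, ∀ j ∈ S, ∀ k, i ≤ k → k ≤ j → k ∈ S

/-- An infinitary word is reduced if no nonempty subword is equivalent to the empty word. -/
def InfWord.Reduced (W : InfWord D) : Prop :=
  ∀ S : Set W.ι, S.Nonempty → IsConvexSub S → ¬(W.restrict S).IsNull

/-- A noncrossing inverse pairing on the infinitary word `W`. -/
structure InfNCIP (W : InfWord D) (Γ : Set (W.ι × W.ι)) : Prop where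
  lt : ∀ p ∈ Γ, p.1 < p.2
  inv : ∀ p ∈ Γ, (W.letter p.1).1 = (W.letter p.2).1 ∧
    (W.letter p.1).2 = !(W.letter p.2).2
  disj : ∀ p ∈ Γ, ∀ q ∈ Γ, p ≠ q → p.1 ≠ q.1 ∧ p.1 ≠ q.2 ∧ p.2 ≠ q.1 ∧ p.2 ≠ q.2
  noncross : ∀ p ∈ Γ, ∀ q ∈ Γ, ¬(p.1 < q.1 ∧ q.1 < p.2 ∧ p.2 < q.2)
  covered : ∀ p ∈ Γ, ∀ k, p.1 ≤ k → k ≤ p.2 → ∃ q ∈ Γ, q.1 = k ∨ q.2 = k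

end EarringPaper

namespace EarringPaper

private lemma mk_pair_mul {D : Type*} (a : D) (b : Bool) :
    FreeGroup.mk [(a, b)] * FreeGroup.mk [(a, !b)] = 1 := by
  have h : FreeGroup.mk [(a, !b)] = (FreeGroup.mk [(a, b)])⁻¹ := by
    rw [FreeGroup.inv_mk]
    rfl
  rw [h, mul_inv_cancel]

private lemma sort_union_append {ι : Type*} [LinearOrder ι] {A B : Finset ι}
    (h : ∀ a ∈ A, ∀ b ∈ B, a < b) :
    (A ∪ B).sort (· ≤ ·) = A.sort (· ≤ ·) ++ B.sort (· ≤ ·) := by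
  have hd : Disjoint A B := Finset.disjoint_left.mpr fun {a} ha hb => lt_irrefl a (h a ha a hb)
  refine (fun hp hs => List.Perm.eq_of_pairwise' (Finset.pairwise_sort _ _) hs hp) ?_ ?_
  · rw [← Multiset.coe_eq_coe]
    rw [← Finset.disjUnion_eq_union A B hd]
    rw [Finset.sort_eq, ← Multiset.coe_add, Finset.sort_eq, Finset.sort_eq]
    rfl
  · rw [List.pairwise_append]
    exact ⟨Finset.pairwise_sort _ _, Finset.pairwise_sort _ _,
      fun a ha b hb =>
        (h a ((Finset.mem_sort _).mp ha) b ((Finset.mem_sort _).mp hb)).le⟩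

private lemma prod_sort_eq_one {D : Type*} (W : InfWord D) (Γ : Set (W.ι × W.ι))
    (hΓ : InfNCIP W Γ) (hfull : ∀ i : W.ι, ∃ p ∈ Γ, p.1 = i ∨ p.2 = i) :
    ∀ (n : ℕ) (T : Finset W.ι), T.card ≤ n → (∀ p ∈ Γ, (p.1 ∈ T ↔ p.2 ∈ T)) →
      ((T.sort (· ≤ ·)).map fun i => FreeGroup.mk [W.letter i]).prod = 1 := by
  intro n
  induction n with
  | zero =>
    intro T hc _
    have : T = ∅ := Finset.card_eq_zero.mp (Nat.le_zero.mp hc)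
    subst this; simp
  | succ n ih =>
    intro T hc hcl
    rcases T.eq_empty_or_nonempty with rfl | hT
    · simp
    classical
    set i := T.min' hT with hi
    obtain ⟨p0, hp0, hp0i⟩ := hfull i
    have hiT : i ∈ T := T.min'_mem hT
    have hp01 : p0.1 = i := by
      rcases hp0i with h | h
      · exact h
      · exfalso
        have h1T : p0.1 ∈ T := (hcl p0 hp0).mpr (h ▸ hiT)
        have hle := T.min'_le _ h1T
        have hlt := hΓ.lt p0 hp0
        rw [h] at hlt
        exact absurd (hle.trans_lt hlt) (lt_irrefl i)
    set j := p0.2 with hj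
    have hij : i < j := hp01 ▸ hΓ.lt p0 hp0
    have hjT : j ∈ T := (hcl p0 hp0).mp (hp01 ▸ hiT)
    set M := T.filter (fun k => i < k ∧ k < j) with hM
    set R := T.filter (fun k => j < k) with hR
    have hTdec : T = {i} ∪ (M ∪ ({j} ∪ R)) := by
      ext k
      simp only [Finset.mem_union, Finset.mem_singleton, hM, hR, Finset.mem_filter]
      constructor
      · intro hk
        have hik : i ≤ k := T.min'_le k hk
        rcases eq_or_lt_of_le hik with h1 | h1
        · exact Or.inl h1.symm
        · rcases lt_trichotomy k j with h2 | h2 | h2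
          · exact Or.inr (Or.inl ⟨hk, h1, h2⟩)
          · exact Or.inr (Or.inr (Or.inl h2))
          · exact Or.inr (Or.inr (Or.inr ⟨hk, h2⟩))
      · rintro (rfl | ⟨hk, -⟩ | rfl | ⟨hk, -⟩) <;> first | exact hiT | exact hjT | exact hk
    have hsortJR : ({j} ∪ R).sort (· ≤ ·) = [j] ++ R.sort (· ≤ ·) := by
      rw [sort_union_append, Finset.sort_singleton]
      intro a ha b hb
      rw [Finset.mem_singleton] at ha
      rw [hR, Finset.mem_filter] at hb
      exact ha ▸ hb.2
    have hsortM : (M ∪ ({j} ∪ R)).sort (· ≤ ·) =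
        M.sort (· ≤ ·) ++ ([j] ++ R.sort (· ≤ ·)) := by
      rw [sort_union_append, hsortJR]
      intro a ha b hb
      rw [hM, Finset.mem_filter] at ha
      rcases Finset.mem_union.mp hb with hb | hb
      · rw [Finset.mem_singleton] at hb
        exact hb ▸ ha.2.2
      · rw [hR, Finset.mem_filter] at hb
        exact ha.2.2.trans hb.2
    have hsortT : T.sort (· ≤ ·) =
        [i] ++ (M.sort (· ≤ ·) ++ ([j] ++ R.sort (· ≤ ·))) := by
      rw [hTdec, sort_union_append, hsortM, Finset.sort_singleton]
      intro a ha b hb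
      rw [Finset.mem_singleton] at ha
      subst ha
      rcases Finset.mem_union.mp hb with hb | hb
      · rw [hM, Finset.mem_filter] at hb
        exact hb.2.1
      · rcases Finset.mem_union.mp hb with hb | hb
        · rw [Finset.mem_singleton] at hb
          exact hb ▸ hij
        · rw [hR, Finset.mem_filter] at hb
          exact hij.trans hb.2
    -- closure for M
    have hclM : ∀ p ∈ Γ, (p.1 ∈ M ↔ p.2 ∈ M) := by
      intro p hp
      simp only [hM, Finset.mem_filter]
      constructor
      · rintro ⟨h1T, h1i, h1j⟩
        have h2T : p.2 ∈ T := (hcl p hp).mp h1T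
        have hlt := hΓ.lt p hp
        refine ⟨h2T, lt_trans h1i hlt, ?_⟩
        rcases lt_trichotomy p.2 j with h | h | h
        · exact h
        · exfalso
          by_cases hpq : p = p0
          · rw [hpq, hp01] at h1i
            exact lt_irrefl _ h1i
          · exact (hΓ.disj p hp p0 hp0 hpq).2.2.2 (h.trans hj)
        · exact absurd ⟨hp01 ▸ h1i, hj ▸ h1j, hj ▸ h⟩ (hΓ.noncross p0 hp0 p hp)
      · rintro ⟨h2T, h2i, h2j⟩
        have h1T : p.1 ∈ T := (hcl p hp).mpr h2T
        have hlt := hΓ.lt p hp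
        refine ⟨h1T, ?_, lt_trans hlt h2j⟩
        rcases lt_trichotomy p.1 i with h | h | h
        · exact absurd (T.min'_le _ h1T) (not_le.mpr h)
        · exfalso
          by_cases hpq : p = p0
          · rw [hpq, ← hj] at h2j
            exact lt_irrefl _ h2j
          · exact (hΓ.disj p hp p0 hp0 hpq).1 (h.trans hp01.symm)
        · exact h
    -- closure for R
    have hclR : ∀ p ∈ Γ, (p.1 ∈ R ↔ p.2 ∈ R) := by
      intro p hp
      simp only [hR, Finset.mem_filter]
      constructor
      · rintro ⟨h1T, h1j⟩
        exact ⟨(hcl p hp).mp h1T, h1j.trans (hΓ.lt p hp)⟩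
      · rintro ⟨h2T, h2j⟩
        have h1T : p.1 ∈ T := (hcl p hp).mpr h2T
        refine ⟨h1T, ?_⟩
        rcases lt_trichotomy p.1 j with h | h | h
        · exfalso
          rcases lt_trichotomy p.1 i with h' | h' | h'
          · exact absurd (T.min'_le _ h1T) (not_le.mpr h')
          · by_cases hpq : p = p0
            · rw [hpq, ← hj] at h2j
              exact lt_irrefl _ h2j
            · exact (hΓ.disj p hp p0 hp0 hpq).1 (h'.trans hp01.symm)
          · exact absurd ⟨hp01 ▸ h', hj ▸ h, hj ▸ h2j⟩ (hΓ.noncross p0 hp0 p hp)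
        · exfalso
          by_cases hpq : p = p0
          · rw [hpq, hp01] at h
            exact absurd hij (by rw [h]; exact lt_irrefl j)
          · exact (hΓ.disj p hp p0 hp0 hpq).2.1 (h.trans hj)
        · exact h
    have hMcard : M.card ≤ n := by
      have hss : M ⊂ T := by
        refine (Finset.ssubset_iff_of_subset (Finset.filter_subset _ _)).mpr ⟨i, hiT, ?_⟩
        simp [hM]
      have := Finset.card_lt_card hss
      omega
    have hRcard : R.card ≤ n := by
      have hss : R ⊂ T := by
        refine (Finset.ssubset_iff_of_subset (Finset.filter_subset _ _)).mpr ⟨j, hjT, ?_⟩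
        simp [hR]
      have := Finset.card_lt_card hss
      omega
    have hPM := ih M hMcard hclM
    have hPR := ih R hRcard hclR
    obtain ⟨hA, hB⟩ := hΓ.inv p0 hp0
    rw [hp01, ← hj] at hA hB
    have hlet : W.letter j = ((W.letter i).1, !(W.letter i).2) := by
      refine Prod.ext hA.symm ?_
      rw [hB]
      simp
    rw [hsortT]
    simp only [List.map_append, List.prod_append, List.map_cons, List.map_nil,
      List.prod_cons, List.prod_nil, hPM, hPR, one_mul, mul_one]
    rw [hlet]
    exact mk_pair_mul _ _

/-- Easy direction of the Cannon–Conner criterion: if `Γ` is a noncrossing inverse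
pairing on `W` covering the whole index set, then for every finite `F ⊆ D` the
restriction of `Γ` is a noncrossing inverse pairing on `W_F` covering all of `W_F`;
consequently `W_F = 1` in the free group for every `F`, i.e. `W` is equivalent to the
empty word. -/
theorem infword_null_of_ncip {D : Type*} (W : InfWord D) (Γ : Set (W.ι × W.ι))
    (hΓ : InfNCIP W Γ) (hfull : ∀ i : W.ι, ∃ p ∈ Γ, p.1 = i ∨ p.2 = i) :
    (∀ F : Finset D,
      InfNCIP (W.restrict {i | (W.letter i).1 ∈ F})
        {p : ({i | (W.letter i).1 ∈ F} : Set W.ι) ×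
             ({i | (W.letter i).1 ∈ F} : Set W.ι) | (p.1.val, p.2.val) ∈ Γ} ∧
      ∀ i : ({i | (W.letter i).1 ∈ F} : Set W.ι),
        ∃ p ∈ {p : ({i | (W.letter i).1 ∈ F} : Set W.ι) ×
             ({i | (W.letter i).1 ∈ F} : Set W.ι) | (p.1.val, p.2.val) ∈ Γ},
          p.1 = i ∨ p.2 = i) ∧
    (∀ F : Finset D, W.evalF F = 1) ∧ W.IsNull := by
  have hnull : ∀ F : Finset D, W.evalF F = 1 := by
    intro F
    unfold InfWord.evalF
    apply prod_sort_eq_one W Γ hΓ hfull ((W.finF F).toFinset.card) _ le_rfl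
    intro p hp
    simp only [Set.Finite.mem_toFinset, Set.mem_setOf_eq]
    rw [(hΓ.inv p hp).1]
  refine ⟨?_, hnull, hnull⟩
  intro F
  set S : Set W.ι := {i | (W.letter i).1 ∈ F} with hS
  -- lifting pairs with one endpoint in S
  have hlift : ∀ q ∈ Γ, ∀ k : S, (q.1 = k.val ∨ q.2 = k.val) →
      ∃ p ∈ {p : S × S | (p.1.val, p.2.val) ∈ Γ}, p.1 = k ∨ p.2 = k := by
    intro q hq k hqk
    have hinv := (hΓ.inv q hq).1
    have h1 : q.1 ∈ S := by
      rcases hqk with h | h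
      · exact h ▸ k.property
      · rw [hS, Set.mem_setOf_eq, hinv, h]
        exact k.property
    have h2 : q.2 ∈ S := by
      rcases hqk with h | h
      · rw [hS, Set.mem_setOf_eq, ← hinv, h]
        exact k.property
      · exact h ▸ k.property
    refine ⟨(⟨q.1, h1⟩, ⟨q.2, h2⟩), hq, ?_⟩
    rcases hqk with h | h
    · exact Or.inl (Subtype.ext h)
    · exact Or.inr (Subtype.ext h)
  constructor
  · constructor
    · intro p hp
      exact hΓ.lt (p.1.val, p.2.val) hp
    · intro p hp
      exact hΓ.inv (p.1.val, p.2.val) hp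
    · intro p hp q hq hne
      have hne' : (p.1.val, p.2.val) ≠ (q.1.val, q.2.val) := by
        intro h
        exact hne (Prod.ext (Subtype.ext (congrArg Prod.fst h))
          (Subtype.ext (congrArg Prod.snd h)))
      obtain ⟨a, b, c, d⟩ := hΓ.disj _ hp _ hq hne'
      exact ⟨fun h => a (congrArg Subtype.val h), fun h => b (congrArg Subtype.val h),
        fun h => c (congrArg Subtype.val h), fun h => d (congrArg Subtype.val h)⟩
    · intro p hp q hq h
      exact hΓ.noncross _ hp _ hq ⟨h.1, h.2.1, h.2.2⟩
    · intro p hp k hk1 hk2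
      obtain ⟨q, hq, hqk⟩ := hΓ.covered _ hp k.val hk1 hk2
      exact hlift q hq k hqk
  · intro k
    obtain ⟨q, hq, hqk⟩ := hfull k.val
    exact hlift q hq k hqk

end EarringPaper
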